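/- Let E be a finite-dimensional real inner product space, let n ≥ 1, s ∈ {1,…,n}, and γ ∈ ℝ. Let x, y ∈ E, let g_1,…,g_n ∈ E and h_1,…,h_n ∈ E with ∑_{i=1}^n h_i = 0, and set g := (1/n)·∑_{i=1}^n g_i. Then the average over all subsets Ω ⊆ {1,…,n} with |Ω| = s (i.e., (1/C(n,s))·∑_Ω, where C(n,s) is the binomial coefficient) satisfies: (1/C(n,s))·∑_{Ω} ∑_{i∈Ω} ‖x − y − γ·g + γ·g_i − γ·h_i‖² = s·‖x − y‖² + (s/n)·γ²·∑_{i=1}^n ‖g_i − h_i‖² − s·γ²·‖g‖², and in particular this average is at most s·‖x − y‖² + (s/n)·γ²·∑_{i=1}^n ‖g_i − h_i‖². -/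

import Mathlib

open Finset

lemma card_filter_mem_powersetCard (n s : ℕ) (hs1 : 1 ≤ s) (i : Fin n) :
    ((powersetCard s (univ : Finset (Fin n))).filter (fun Ω => i ∈ Ω)).card
      = (n - 1).choose (s - 1) := by
  have : ((powersetCard s (univ : Finset (Fin n))).filter (fun Ω => i ∈ Ω)).card
      = (powersetCard (s - 1) ((univ : Finset (Fin n)).erase i)).card := by
    apply card_bij (fun Ω _ => Ω.erase i)
    · intro Ω hΩ
      simp only [mem_filter, mem_powersetCard] at hΩ
      simp only [mem_powersetCard]
      refine ⟨erase_subset_erase _ hΩ.1.1, ?_⟩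
      rw [card_erase_of_mem hΩ.2, hΩ.1.2]
    · intro Ω hΩ Ω' hΩ' hee
      simp only [mem_filter] at hΩ hΩ'
      rw [← insert_erase hΩ.2, hee, insert_erase hΩ'.2]
    · intro t ht
      simp only [mem_powersetCard] at ht
      refine ⟨insert i t, ?_, ?_⟩
      · simp only [mem_filter, mem_powersetCard]
        have hit : i ∉ t := fun hmem => (notMem_erase i univ) (ht.1 hmem)
        refine ⟨⟨subset_univ _, ?_⟩, mem_insert_self _ _⟩
        rw [card_insert_of_notMem hit, ht.2]
        omega
      · rw [erase_insert (fun hmem => (notMem_erase i univ) (ht.1 hmem))]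
  rw [this, card_powersetCard, card_erase_of_mem (mem_univ i), card_univ, Fintype.card_fin]

lemma sum_powersetCard_sum (n s : ℕ) (hs1 : 1 ≤ s) (f : Fin n → ℝ) :
    ∑ Ω ∈ powersetCard s (univ : Finset (Fin n)), ∑ i ∈ Ω, f i
      = ((n - 1).choose (s - 1) : ℝ) * ∑ i, f i := by
  have h1 : ∀ Ω : Finset (Fin n), ∑ i ∈ Ω, f i
      = ∑ i : Fin n, if i ∈ Ω then f i else 0 := by
    intro Ω
    rw [sum_ite_mem, univ_inter]
  simp_rw [h1]
  rw [Finset.sum_comm]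
  have h2 : ∀ i : Fin n,
      (∑ Ω ∈ powersetCard s (univ : Finset (Fin n)), if i ∈ Ω then f i else 0)
        = ((n - 1).choose (s - 1) : ℝ) * f i := by
    intro i
    rw [sum_ite, sum_const_zero, add_zero, sum_const, nsmul_eq_mul,
      card_filter_mem_powersetCard n s hs1 i]
  simp_rw [h2]
  rw [← mul_sum]
  simp

/-- The variance decomposition (eql1) of the paper: the average over all size-s
subsets Ω of `∑_{i∈Ω} ‖x - y - γg + γgᵢ - γhᵢ‖²`, where `∑ hᵢ = 0` and `g` is the
average of the `gᵢ`. -/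
theorem subset_variance_decomposition {E : Type*} [NormedAddCommGroup E]
    [InnerProductSpace ℝ E] [FiniteDimensional ℝ E]
    (n s : ℕ) (hn : 1 ≤ n) (hs1 : 1 ≤ s) (hsn : s ≤ n) (γ : ℝ)
    (x y : E) (gi h : Fin n → E) (hh : ∑ i, h i = 0)
    (g : E) (hg : g = (n : ℝ)⁻¹ • ∑ i, gi i) :
    ((n.choose s : ℝ))⁻¹ *
        ∑ Ω ∈ powersetCard s (univ : Finset (Fin n)),
          ∑ i ∈ Ω, ‖x - y - γ • g + γ • gi i - γ • h i‖ ^ 2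
      = (s : ℝ) * ‖x - y‖ ^ 2
          + ((s : ℝ) / n) * γ ^ 2 * ∑ i, ‖gi i - h i‖ ^ 2
          - (s : ℝ) * γ ^ 2 * ‖g‖ ^ 2 ∧
    ((n.choose s : ℝ))⁻¹ *
        ∑ Ω ∈ powersetCard s (univ : Finset (Fin n)),
          ∑ i ∈ Ω, ‖x - y - γ • g + γ • gi i - γ • h i‖ ^ 2
      ≤ (s : ℝ) * ‖x - y‖ ^ 2
          + ((s : ℝ) / n) * γ ^ 2 * ∑ i, ‖gi i - h i‖ ^ 2 := by
  have hn0 : (n : ℝ) ≠ 0 := by positivity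
  have hgsum : ∑ i, gi i = (n : ℝ) • g := by
    rw [hg, smul_inv_smul₀ hn0]
  -- sum over i of the norm squared terms
  have key : ∀ i : Fin n, x - y - γ • g + γ • gi i - γ • h i
      = (x - y) + γ • (gi i - h i - g) := by
    intro i
    rw [smul_sub, smul_sub]
    abel
  have hwsum : ∑ i : Fin n, (gi i - h i - g) = 0 := by
    rw [sum_sub_distrib, sum_sub_distrib, hgsum, hh, sum_const, card_univ,
      Fintype.card_fin, sub_zero, ← Nat.cast_smul_eq_nsmul ℝ, sub_self]
  have hnorm : ∀ i : Fin n, ‖x - y - γ • g + γ • gi i - γ • h i‖ ^ 2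
      = ‖x - y‖ ^ 2 + 2 * γ * inner ℝ (x - y) (gi i - h i - g)
        + γ ^ 2 * ‖gi i - h i - g‖ ^ 2 := by
    intro i
    rw [key i, norm_add_sq_real, real_inner_smul_right, norm_smul, mul_pow,
      Real.norm_eq_abs, sq_abs]
    ring
  have hw2 : ∀ i : Fin n, ‖gi i - h i - g‖ ^ 2
      = ‖gi i - h i‖ ^ 2 - 2 * inner ℝ (gi i - h i) g + ‖g‖ ^ 2 := by
    intro i
    rw [norm_sub_sq_real]
  have hsum : (∑ i : Fin n, ‖x - y - γ • g + γ • gi i - γ • h i‖ ^ 2)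
      = (n : ℝ) * ‖x - y‖ ^ 2 + γ ^ 2 * (∑ i, ‖gi i - h i‖ ^ 2 - (n : ℝ) * ‖g‖ ^ 2) := by
    simp_rw [hnorm]
    rw [sum_add_distrib, sum_add_distrib, sum_const, card_univ, Fintype.card_fin,
      nsmul_eq_mul, ← mul_sum, ← mul_sum, ← inner_sum, hwsum, inner_zero_right, mul_zero,
      add_zero]
    congr 1
    simp_rw [hw2]
    rw [sum_add_distrib, sum_sub_distrib, ← mul_sum, ← sum_inner, sum_sub_distrib,
      hgsum, hh, sub_zero, real_inner_smul_left, real_inner_self_eq_norm_sq,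
      sum_const, card_univ, Fintype.card_fin, nsmul_eq_mul]
    ring
  have hchoose : ((n.choose s : ℝ))⁻¹ * ((n - 1).choose (s - 1) : ℝ) = (s : ℝ) / n := by
    have hcard : n * (n - 1).choose (s - 1) = n.choose s * s := by
      have := Nat.add_one_mul_choose_eq (n - 1) (s - 1)
      simp only [Nat.succ_eq_add_one, Nat.sub_add_cancel hn, Nat.sub_add_cancel hs1] at this
      exact this
    have hc0 : (n.choose s : ℝ) ≠ 0 := by
      have := Nat.choose_pos hsn
      positivity
    have hcr : (n : ℝ) * ((n - 1).choose (s - 1) : ℝ) = (n.choose s : ℝ) * s := by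
      exact_mod_cast hcard
    field_simp
    linarith [hcr]
  have heq : ((n.choose s : ℝ))⁻¹ *
        ∑ Ω ∈ powersetCard s (univ : Finset (Fin n)),
          ∑ i ∈ Ω, ‖x - y - γ • g + γ • gi i - γ • h i‖ ^ 2
      = (s : ℝ) * ‖x - y‖ ^ 2
          + ((s : ℝ) / n) * γ ^ 2 * ∑ i, ‖gi i - h i‖ ^ 2
          - (s : ℝ) * γ ^ 2 * ‖g‖ ^ 2 := by
    rw [sum_powersetCard_sum n s hs1, hsum, ← mul_assoc, hchoose]
    field_simp
    ring
  refine ⟨heq, ?_⟩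
  rw [heq]
  have : 0 ≤ (s : ℝ) * γ ^ 2 * ‖g‖ ^ 2 := by positivity
  linarith
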